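/- Let E ⊆ ℤ^r be a set satisfying: closure under componentwise minimum, the exchange property (for α, β ∈ E with α_j = β_j there exists ε ∈ E with ε_j > α_j and ε_i ≥ min{α_i, β_i} for i ≠ j, with equality whenever α_i ≠ β_i), and existence of a conductor. Then any two saturated chains in E between the same two endpoints α⁰ < αⁿ have the same length. -/

import Mathlib

/-- A saturated chain of length `n` in `E ⊆ ℤ^r` from `a` to `b`: a strictly increasing
(for the componentwise partial order) sequence `a = α⁰ < α¹ < ⋯ < αⁿ = b` of elements of `E`
such that no element of `E` lies strictly between two consecutive terms. -/
def IsSatChain (r : ℕ) (E : Set (Fin r → ℤ)) (a b : Fin r → ℤ) (n : ℕ) : Prop :=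
  ∃ α : ℕ → (Fin r → ℤ), α 0 = a ∧ α n = b ∧ (∀ i ≤ n, α i ∈ E) ∧
    (∀ i < n, α i < α (i + 1)) ∧
    ∀ i < n, ∀ ε ∈ E, ¬ (α i < ε ∧ ε < α (i + 1))

namespace SatChainAux

variable {r : ℕ} {E : Set (Fin r → ℤ)}

/-- The measure used for the inductions. -/
def meas (s t : Fin r → ℤ) : ℕ := ∑ i, (t i - s i).toNat

lemma meas_le_left {s s' : Fin r → ℤ} (h : s ≤ s') (t : Fin r → ℤ) :
    meas s' t ≤ meas s t :=
  Finset.sum_le_sum fun i _ => Int.toNat_le_toNat (by have h1 : s i ≤ s' i := h i; omega)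

lemma exists_lt_coord {s s' : Fin r → ℤ} (h1 : s ≤ s') (h3 : s ≠ s') :
    ∃ j, s j < s' j := by
  by_contra h
  push_neg at h
  exact h3 (funext fun i => le_antisymm (h1 i) (h i))

lemma meas_lt_left {s s' t : Fin r → ℤ} (h1 : s ≤ s') (h2 : s' ≤ t) (h3 : s ≠ s') :
    meas s' t < meas s t := by
  obtain ⟨j, hj⟩ := exists_lt_coord h1 h3
  refine Finset.sum_lt_sum (fun i _ => Int.toNat_le_toNat
      (by have ha : s i ≤ s' i := h1 i; omega))
    ⟨j, Finset.mem_univ j, ?_⟩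
  have hb : s' j ≤ t j := h2 j
  omega

lemma meas_lt_right {s t' t : Fin r → ℤ} (h1 : s ≤ t') (h2 : t' ≤ t) (h3 : t' ≠ t) :
    meas s t' < meas s t := by
  obtain ⟨j, hj⟩ := exists_lt_coord h2 h3
  refine Finset.sum_lt_sum (fun i _ => Int.toNat_le_toNat
      (by have ha : t' i ≤ t i := h2 i; omega))
    ⟨j, Finset.mem_univ j, ?_⟩
  have hb : s j ≤ t' j := h1 j
  omega

lemma chain_mono {n : ℕ} {α : ℕ → Fin r → ℤ} (h : ∀ i < n, α i < α (i + 1)) :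
    ∀ i j, i ≤ j → j ≤ n → α i ≤ α j := by
  intro i j hij hjn
  induction j with
  | zero => obtain rfl : i = 0 := Nat.le_zero.mp hij; exact le_refl _
  | succ j ih =>
    rcases eq_or_lt_of_le hij with rfl | h'
    · exact le_refl _
    · exact le_trans (ih (Nat.lt_succ_iff.mp h') (by omega)) (h j (by omega)).le

lemma chain_strict {n : ℕ} {α : ℕ → Fin r → ℤ} (h : ∀ i < n, α i < α (i + 1)) :
    ∀ i j, i < j → j ≤ n → α i < α j := fun i j hij hjn =>
  lt_of_lt_of_le (h i (by omega)) (chain_mono h (i + 1) j (by omega) hjn)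

lemma satChain_zero {s : Fin r → ℤ} (hs : s ∈ E) : IsSatChain r E s s 0 :=
  ⟨fun _ => s, rfl, rfl, fun _ _ => hs, fun i hi => absurd hi (Nat.not_lt_zero i),
    fun i hi => absurd hi (Nat.not_lt_zero i)⟩

lemma satChain_one {s t : Fin r → ℤ} (hs : s ∈ E) (ht : t ∈ E) (hst : s < t)
    (hnb : ∀ e ∈ E, ¬ (s < e ∧ e < t)) : IsSatChain r E s t 1 := by
  refine ⟨fun k => if k = 0 then s else t, by simp, by simp, ?_, ?_, ?_⟩
  · intro i _
    by_cases h : i = 0 <;> simp [h, hs, ht]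
  · intro i hi
    obtain rfl : i = 0 := by omega
    simpa using hst
  · intro i hi e he
    obtain rfl : i = 0 := by omega
    simpa using hnb e he

lemma satChain_snoc {s v t : Fin r → ℤ} {n : ℕ} (h : IsSatChain r E s v n)
    (ht : t ∈ E) (hvt : v < t) (hnb : ∀ e ∈ E, ¬ (v < e ∧ e < t)) :
    IsSatChain r E s t (n + 1) := by
  obtain ⟨α, h0, hn, hmem, hstep, hsat⟩ := h
  refine ⟨fun k => if k ≤ n then α k else t, ?_, ?_, ?_, ?_, ?_⟩
  · show (if 0 ≤ n then α 0 else t) = s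
    rw [if_pos (Nat.zero_le n)]; exact h0
  · show (if n + 1 ≤ n then α (n + 1) else t) = t
    rw [if_neg (by omega)]
  · intro i _
    show (if i ≤ n then α i else t) ∈ E
    by_cases h : i ≤ n
    · rw [if_pos h]; exact hmem i h
    · rw [if_neg h]; exact ht
  · intro i hi
    show (if i ≤ n then α i else t) < (if i + 1 ≤ n then α (i + 1) else t)
    by_cases h : i < n
    · rw [if_pos (by omega : i ≤ n), if_pos (by omega : i + 1 ≤ n)]
      exact hstep i h
    · obtain rfl : i = n := by omega
      rw [if_pos le_rfl, if_neg (by omega), hn]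
      exact hvt
  · intro i hi e he
    show ¬ ((if i ≤ n then α i else t) < e ∧ e < (if i + 1 ≤ n then α (i + 1) else t))
    by_cases h : i < n
    · rw [if_pos (by omega : i ≤ n), if_pos (by omega : i + 1 ≤ n)]
      exact hsat i h e he
    · obtain rfl : i = n := by omega
      rw [if_pos le_rfl, if_neg (by omega), hn]
      exact hnb e he

lemma satChain_trunc {s t : Fin r → ℤ} {n : ℕ} (h : IsSatChain r E s t (n + 1)) :
    ∃ v, IsSatChain r E s v n ∧ v ∈ E ∧ s ≤ v ∧ v < t ∧
      ∀ e ∈ E, ¬ (v < e ∧ e < t) := by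
  obtain ⟨α, h0, hn, hmem, hstep, hsat⟩ := h
  refine ⟨α n, ⟨α, h0, rfl, fun i hi => hmem i (by omega), fun i hi => hstep i (by omega),
      fun i hi => hsat i (by omega)⟩, hmem n (by omega), ?_, ?_, ?_⟩
  · rw [← h0]; exact chain_mono hstep 0 n (Nat.zero_le n) (Nat.le_succ n)
  · rw [← hn]; exact hstep n (Nat.lt_succ_self n)
  · rw [← hn]; exact hsat n (Nat.lt_succ_self n)

lemma satChain_basic {s t : Fin r → ℤ} {n : ℕ} (h : IsSatChain r E s t n) :
    s ∈ E ∧ t ∈ E ∧ s ≤ t := by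
  obtain ⟨α, h0, hn, hmem, hstep, -⟩ := h
  exact ⟨h0 ▸ hmem 0 (Nat.zero_le n), hn ▸ hmem n le_rfl,
    h0 ▸ hn ▸ chain_mono hstep 0 n (Nat.zero_le n) le_rfl⟩

lemma satChain_concat {s u t : Fin r → ℤ} {p q : ℕ} (h1 : IsSatChain r E s u p)
    (h2 : IsSatChain r E u t q) : IsSatChain r E s t (p + q) := by
  induction q generalizing t with
  | zero =>
    obtain ⟨β, hb0, hbq, -, -, -⟩ := h2
    have hut : u = t := hb0.symm.trans hbq
    rw [← hut]
    simpa using h1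
  | succ q ih =>
    obtain ⟨v, hc, hvE, -, hvt, hnb⟩ := satChain_trunc h2
    exact satChain_snoc (ih hc) (satChain_basic h2).2.1 hvt hnb

/-- Existence of saturated chains between comparable members of `E`. -/
lemma satChain_exists_aux :
    ∀ N : ℕ, ∀ s t : Fin r → ℤ, s ∈ E → t ∈ E → s ≤ t → meas s t ≤ N →
      ∃ n, IsSatChain r E s t n := by
  intro N
  induction N using Nat.strong_induction_on with
  | _ N IH =>
    intro s t hs ht hst hN
    rcases eq_or_ne s t with rfl | hne
    · exact ⟨0, satChain_zero hs⟩
    have hlt : s < t := lt_of_le_of_ne hst hne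
    have hTfin : {e : Fin r → ℤ | e ∈ E ∧ s < e ∧ e ≤ t}.Finite :=
      (Set.finite_Icc s t).subset fun e ⟨_, h1, h2⟩ => Set.mem_Icc.mpr ⟨h1.le, h2⟩
    have hTne : hTfin.toFinset.Nonempty :=
      ⟨t, hTfin.mem_toFinset.mpr ⟨ht, hlt, le_rfl⟩⟩
    obtain ⟨y, hyM⟩ := Finset.exists_minimal hTne
    have hyT : y ∈ hTfin.toFinset := hyM.1
    have hymin : ∀ e ∈ hTfin.toFinset, ¬ e < y := fun e he hlt =>
      lt_irrefl _ (lt_of_lt_of_le hlt (hyM.2 he hlt.le))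
    obtain ⟨hyE, hsy, hyt⟩ := hTfin.mem_toFinset.mp hyT
    have hnb : ∀ e ∈ E, ¬ (s < e ∧ e < y) := by
      intro e he hh
      exact hymin e (hTfin.mem_toFinset.mpr ⟨he, hh.1, le_trans hh.2.le hyt⟩) hh.2
    have hmeas : meas y t < meas s t := meas_lt_left hsy.le hyt hsy.ne
    obtain ⟨n, hn⟩ := IH (meas y t) (lt_of_lt_of_le hmeas hN) y t hyE ht hyt le_rfl
    exact ⟨1 + n, satChain_concat (satChain_one hs hyE hsy hnb) hn⟩

lemma satChain_exists {s t : Fin r → ℤ} (hs : s ∈ E) (ht : t ∈ E) (hst : s ≤ t) :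
    ∃ n, IsSatChain r E s t n :=
  satChain_exists_aux (meas s t) s t hs ht hst le_rfl

section Main

variable (hmin : ∀ a ∈ E, ∀ b ∈ E, (fun i => min (a i) (b i)) ∈ E)
variable (hexch : ∀ a ∈ E, ∀ b ∈ E, ∀ j : Fin r, a j = b j →
      ∃ ε ∈ E, a j < ε j ∧ ∀ i, i ≠ j →
        min (a i) (b i) ≤ ε i ∧ (a i ≠ b i → ε i = min (a i) (b i)))

include hmin hexch

/-- The key branch construction: if there is an element of `E` strictly between `x ⊓ y`
and `x`, where `x, y` are distinct elements with no element of `E` strictly between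
them and `z`, then using the inductive hypotheses we can still produce equal length
saturated chains from `x ⊓ y` to `x` and to `y`. -/
lemma branch_lemma
    {x y z ε : Fin r → ℤ}
    (hxE : x ∈ E) (hyE : y ∈ E) (hzE : z ∈ E)
    (hxz : x < z) (hyz : y < z)
    (hxnb : ∀ e ∈ E, ¬ (x < e ∧ e < z)) (hynb : ∀ e ∈ E, ¬ (y < e ∧ e < z))
    (hxy : x ≠ y)
    (hεE : ε ∈ E) (hmε : (fun i => min (x i) (y i)) < ε) (hεx : ε < x)
    (IHL2 : ∀ x' y' z' : Fin r → ℤ, x' ∈ E → y' ∈ E → z' ∈ E → x' < z' → y' < z' →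
      (∀ e ∈ E, ¬ (x' < e ∧ e < z')) → (∀ e ∈ E, ¬ (y' < e ∧ e < z')) → x' ≠ y' →
      meas (fun i => min (x' i) (y' i)) z' < meas (fun i => min (x i) (y i)) z →
      ∃ k, IsSatChain r E (fun i => min (x' i) (y' i)) x' k ∧
           IsSatChain r E (fun i => min (x' i) (y' i)) y' k)
    (IHQ : ∀ s t : Fin r → ℤ, ∀ p q : ℕ, meas s t < meas (fun i => min (x i) (y i)) z →
      IsSatChain r E s t p → IsSatChain r E s t q → p = q) :
    ∃ k, IsSatChain r E (fun i => min (x i) (y i)) x k ∧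
         IsSatChain r E (fun i => min (x i) (y i)) y k := by
  classical
  set m : Fin r → ℤ := fun i => min (x i) (y i) with hmdef
  have hmE : m ∈ E := hmin x hxE y hyE
  have hmx : m ≤ x := fun i => min_le_left _ _
  have hmy : m ≤ y := fun i => min_le_right _ _
  have hmεle : m ≤ ε := hmε.le
  have hεxle : ε ≤ x := hεx.le
  have hεney : ¬ ε ≤ y := by
    intro h
    exact hmε.ne (le_antisymm hmεle fun i => le_min (hεxle i) (h i))
  -- a coordinate where x < y
  obtain ⟨j, hj⟩ : ∃ j, x j < y j := by
    by_contra h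
    push_neg at h
    have hyx : y < x := lt_of_le_of_ne (fun i => h i) (Ne.symm hxy)
    exact hynb x hxE ⟨hyx, hxz⟩
  have hmj : m j = x j := min_eq_left hj.le
  have hεj : ε j = x j := le_antisymm (hεxle j) (hmj ▸ hmεle j)
  -- the exchange property at j
  obtain ⟨η, hηE, hηj, hηi⟩ := hexch ε hεE x hxE j hεj
  have hεη : ε ≤ η := by
    intro i
    by_cases h : i = j
    · subst h; exact hηj.le
    · have := (hηi i h).1; rwa [min_eq_left (hεxle i)] at this
  -- a coordinate where ε < x
  obtain ⟨d, hd⟩ := exists_lt_coord hεxle hεx.ne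
  have hdj : d ≠ j := by
    intro h; rw [h, hεj] at hd; exact lt_irrefl _ hd
  have hηd : η d = ε d := by
    have := (hηi d hdj).2 hd.ne
    rwa [min_eq_left (hεxle d)] at this
  -- ν := η ⊓ z
  set ν : Fin r → ℤ := fun i => min (η i) (z i) with hνdef
  have hνE : ν ∈ E := hmin η hηE z hzE
  have hεν : ε ≤ ν := fun i => le_min (hεη i) (le_trans (hεxle i) (hxz.le i))
  have hνz : ν ≤ z := fun i => min_le_right _ _
  have hνd : ν d = ε d := by
    have hεzd : ε d ≤ z d := le_trans (hεxle d) (hxz.le d)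
    simp only [hνdef, hηd, min_eq_left hεzd]
  have hνnez : ν ≠ z := by
    intro h
    have h1 : ν d = z d := congrFun h d
    rw [hνd] at h1
    have h2 : x d ≤ z d := hxz.le d
    omega
  have hνj : x j < ν j :=
    lt_min (hεj ▸ hηj) (lt_of_lt_of_le hj (hyz.le j))
  -- x' : a maximal element of E between ν and z (excluding z); it is covered by z
  have hFfin : {e : Fin r → ℤ | e ∈ E ∧ ν ≤ e ∧ e ≤ z ∧ e ≠ z}.Finite :=
    (Set.finite_Icc ν z).subset fun e ⟨_, h1, h2, _⟩ => Set.mem_Icc.mpr ⟨h1, h2⟩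
  have hFne : hFfin.toFinset.Nonempty :=
    ⟨ν, hFfin.mem_toFinset.mpr ⟨hνE, le_rfl, hνz, hνnez⟩⟩
  obtain ⟨x', hx'M⟩ := Finset.exists_maximal hFne
  have hx'F : x' ∈ hFfin.toFinset := hx'M.1
  have hx'max : ∀ e ∈ hFfin.toFinset, ¬ x' < e := fun e he hlt =>
    lt_irrefl _ (lt_of_lt_of_le hlt (hx'M.2 he hlt.le))
  obtain ⟨hx'E, hνx', hx'lez, hx'nez⟩ := hFfin.mem_toFinset.mp hx'F
  have hx'z : x' < z := lt_of_le_of_ne hx'lez hx'nez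
  have hx'nb : ∀ e ∈ E, ¬ (x' < e ∧ e < z) := by
    intro e he hh
    exact hx'max e (hFfin.mem_toFinset.mpr
      ⟨he, le_trans hνx' hh.1.le, hh.2.le, hh.2.ne⟩) hh.1
  have hεx' : ε ≤ x' := le_trans hεν hνx'
  have hxx' : x ≠ x' := by
    intro h
    have : x j < x' j := lt_of_lt_of_le hνj (hνx' j)
    rw [← h] at this
    exact lt_irrefl _ this
  have hyx' : y ≠ x' := by
    intro h
    exact hεney (h ▸ hεx')
  -- θ := η ⊓ y, witnessing m ≠ y ⊓ x'
  set θ : Fin r → ℤ := fun i => min (η i) (y i) with hθdef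
  have hmθ : m ≤ θ := fun i => le_min (le_trans (hmεle i) (hεη i)) (hmy i)
  have hθj : m j < θ j := by
    rw [hmj]
    exact lt_min (hεj ▸ hηj) hj
  have hmθne : m ≠ θ := fun h => absurd (congrFun h j) (ne_of_lt hθj)
  have hθy : θ ≤ y := fun i => min_le_right _ _
  have hθν : θ ≤ ν := fun i =>
    le_min (min_le_left _ _) (le_trans (min_le_right _ _) (hyz.le i))
  -- the two smaller configurations
  have hm_m₁ : m ≤ fun i => min (x i) (x' i) :=
    fun i => le_min (hmx i) (le_trans (hmεle i) (hεx' i))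
  have hεm₁ : ε ≤ fun i => min (x i) (x' i) := fun i => le_min (hεxle i) (hεx' i)
  have hm₁ne : m ≠ fun i => min (x i) (x' i) := by
    intro h
    exact hmε.ne (le_antisymm hmεle (h ▸ hεm₁))
  have hm₁z : (fun i => min (x i) (x' i)) ≤ z :=
    fun i => le_trans (min_le_left _ _) (hxz.le i)
  obtain ⟨k₁, c₁, c₂⟩ := IHL2 x x' z hxE hx'E hzE hxz hx'z hxnb hx'nb hxx'
    (meas_lt_left hm_m₁ hm₁z hm₁ne)
  have hm_m₂ : m ≤ fun i => min (y i) (x' i) :=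
    fun i => le_min (hmy i) (le_trans (hmεle i) (hεx' i))
  have hθm₂ : θ ≤ fun i => min (y i) (x' i) :=
    fun i => le_min (hθy i) (le_trans (hθν i) (hνx' i))
  have hm₂ne : m ≠ fun i => min (y i) (x' i) := by
    intro h
    exact hmθne (le_antisymm hmθ (h ▸ hθm₂))
  have hm₂z : (fun i => min (y i) (x' i)) ≤ z :=
    fun i => le_trans (min_le_left _ _) (hyz.le i)
  obtain ⟨k₂, c₃, c₄⟩ := IHL2 y x' z hyE hx'E hzE hyz hx'z hynb hx'nb hyx'
    (meas_lt_left hm_m₂ hm₂z hm₂ne)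
  -- chains from m to the two meets
  have hm₁E : (fun i => min (x i) (x' i)) ∈ E := hmin x hxE x' hx'E
  have hm₂E : (fun i => min (y i) (x' i)) ∈ E := hmin y hyE x' hx'E
  obtain ⟨q₁, e₁⟩ := satChain_exists hmE hm₁E hm_m₁
  obtain ⟨q₂, e₂⟩ := satChain_exists hmE hm₂E hm_m₂
  -- compare the two chains from m to x'
  have hm_x' : m ≤ x' := le_trans hm_m₁ fun i => min_le_right _ _
  have hk : q₁ + k₁ = q₂ + k₂ :=
    IHQ m x' (q₁ + k₁) (q₂ + k₂) (meas_lt_right hm_x' hx'lez hx'nez)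
      (satChain_concat e₁ c₂) (satChain_concat e₂ c₄)
  refine ⟨q₁ + k₁, satChain_concat e₁ c₁, ?_⟩
  rw [hk]
  exact satChain_concat e₂ c₃

/-- The combined induction: (1) for two distinct elements `x, y` covered by a common `z`,
there exist equal-length saturated chains from `x ⊓ y` to `x` and to `y`; (2) any two
saturated chains between the same endpoints have equal length. -/
lemma combined : ∀ N : ℕ,
    (∀ x y z : Fin r → ℤ, x ∈ E → y ∈ E → z ∈ E → x < z → y < z →
      (∀ e ∈ E, ¬ (x < e ∧ e < z)) → (∀ e ∈ E, ¬ (y < e ∧ e < z)) → x ≠ y →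
      meas (fun i => min (x i) (y i)) z ≤ N →
      ∃ k, IsSatChain r E (fun i => min (x i) (y i)) x k ∧
           IsSatChain r E (fun i => min (x i) (y i)) y k)
    ∧ (∀ s t : Fin r → ℤ, ∀ p q : ℕ, meas s t ≤ N →
        IsSatChain r E s t p → IsSatChain r E s t q → p = q) := by
  intro N
  induction N using Nat.strong_induction_on with
  | _ N IH =>
    have hL2 : ∀ x y z : Fin r → ℤ, x ∈ E → y ∈ E → z ∈ E → x < z → y < z →
        (∀ e ∈ E, ¬ (x < e ∧ e < z)) → (∀ e ∈ E, ¬ (y < e ∧ e < z)) → x ≠ y →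
        meas (fun i => min (x i) (y i)) z ≤ N →
        ∃ k, IsSatChain r E (fun i => min (x i) (y i)) x k ∧
             IsSatChain r E (fun i => min (x i) (y i)) y k := by
      intro x y z hxE hyE hzE hxz hyz hxnb hynb hxy hN
      by_cases h1 : ∃ e ∈ E, (fun i => min (x i) (y i)) < e ∧ e < x
      · obtain ⟨ε, hεE, hA, hB⟩ := h1
        exact branch_lemma hmin hexch hxE hyE hzE hxz hyz hxnb hynb hxy hεE hA hB
          (fun x' y' z' a1 a2 a3 a4 a5 a6 a7 a8 hlt =>
            (IH _ (lt_of_lt_of_le hlt hN)).1 x' y' z' a1 a2 a3 a4 a5 a6 a7 a8 le_rfl)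
          (fun s t p q hlt d1 d2 =>
            (IH _ (lt_of_lt_of_le hlt hN)).2 s t p q le_rfl d1 d2)
      · by_cases h2 : ∃ e ∈ E, (fun i => min (x i) (y i)) < e ∧ e < y
        · obtain ⟨ε, hεE, hA, hB⟩ := h2
          have hms : (fun i => min (y i) (x i)) = fun i => min (x i) (y i) :=
            funext fun i => min_comm (y i) (x i)
          obtain ⟨k, cy, cx⟩ := branch_lemma hmin hexch hyE hxE hzE hyz hxz hynb hxnb
            (Ne.symm hxy) hεE (by rw [hms]; exact hA) hB
            (fun x' y' z' a1 a2 a3 a4 a5 a6 a7 a8 hlt => by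
              rw [hms] at hlt
              exact (IH _ (lt_of_lt_of_le hlt hN)).1 x' y' z' a1 a2 a3 a4 a5 a6 a7 a8 le_rfl)
            (fun s t p q hlt d1 d2 => by
              rw [hms] at hlt
              exact (IH _ (lt_of_lt_of_le hlt hN)).2 s t p q le_rfl d1 d2)
          rw [hms] at cx cy
          exact ⟨k, cx, cy⟩
        · -- both intervals empty : the meet is covered by x and by y
          have hmE : (fun i => min (x i) (y i)) ∈ E := hmin x hxE y hyE
          have hmxne : (fun i => min (x i) (y i)) ≠ x := by
            intro h
            have hxley : x ≤ y := fun i =>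
              min_eq_left_iff.mp (congrFun h i)
            exact hxnb y hyE ⟨lt_of_le_of_ne hxley hxy, hyz⟩
          have hmyne : (fun i => min (x i) (y i)) ≠ y := by
            intro h
            have hylex : y ≤ x := fun i =>
              min_eq_right_iff.mp (congrFun h i)
            exact hynb x hxE ⟨lt_of_le_of_ne hylex (Ne.symm hxy), hxz⟩
          have hmx : (fun i => min (x i) (y i)) < x :=
            lt_of_le_of_ne (fun i => min_le_left _ _) hmxne
          have hmy : (fun i => min (x i) (y i)) < y :=
            lt_of_le_of_ne (fun i => min_le_right _ _) hmyne
          exact ⟨1, satChain_one hmE hxE hmx (fun e he hh => h1 ⟨e, he, hh⟩),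
            satChain_one hmE hyE hmy (fun e he hh => h2 ⟨e, he, hh⟩)⟩
    refine ⟨hL2, ?_⟩
    intro s t p q hN c1 c2
    cases p with
    | zero =>
      obtain ⟨α, ha0, han, -, -, -⟩ := c1
      have hst : s = t := ha0.symm.trans han
      cases q with
      | zero => rfl
      | succ qq =>
        obtain ⟨β, hb0, hbn, -, hstep, -⟩ := c2
        have := chain_strict hstep 0 (qq + 1) (by omega) le_rfl
        rw [hb0, hbn, ← hst] at this
        exact absurd this (lt_irrefl s)
    | succ pp =>
      cases q with
      | zero =>
        obtain ⟨β, hb0, hbn, -, -, -⟩ := c2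
        have hst : s = t := hb0.symm.trans hbn
        obtain ⟨α, ha0, han, -, hstep, -⟩ := c1
        have := chain_strict hstep 0 (pp + 1) (by omega) le_rfl
        rw [ha0, han, ← hst] at this
        exact absurd this (lt_irrefl s)
      | succ qq =>
        obtain ⟨v₁, c1', hv1E, hsv1, hv1t, hnb1⟩ := satChain_trunc c1
        obtain ⟨v₂, c2', hv2E, hsv2, hv2t, hnb2⟩ := satChain_trunc c2
        obtain ⟨hsE, htE, -⟩ := satChain_basic c1
        by_cases hv : v₁ = v₂
        · subst hv
          have hm1 : meas s v₁ < meas s t := meas_lt_right hsv1 hv1t.le hv1t.ne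
          have := (IH _ (lt_of_lt_of_le hm1 hN)).2 s v₁ pp qq le_rfl c1' c2'
          omega
        · have hsw : s ≤ fun i => min (v₁ i) (v₂ i) :=
            fun i => le_min (hsv1 i) (hsv2 i)
          have hwE : (fun i => min (v₁ i) (v₂ i)) ∈ E := hmin v₁ hv1E v₂ hv2E
          have hwt : meas (fun i => min (v₁ i) (v₂ i)) t ≤ N :=
            le_trans (meas_le_left hsw t) hN
          obtain ⟨k, cw1, cw2⟩ := hL2 v₁ v₂ t hv1E hv2E htE hv1t hv2t hnb1 hnb2 hv hwt
          obtain ⟨qq', e⟩ := satChain_exists hsE hwE hsw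
          have hm1 : meas s v₁ < meas s t := meas_lt_right hsv1 hv1t.le hv1t.ne
          have hA := (IH _ (lt_of_lt_of_le hm1 hN)).2 s v₁ pp (qq' + k) le_rfl c1'
            (satChain_concat e cw1)
          have hm2 : meas s v₂ < meas s t := meas_lt_right hsv2 hv2t.le hv2t.ne
          have hB := (IH _ (lt_of_lt_of_le hm2 hN)).2 s v₂ qq (qq' + k) le_rfl c2'
            (satChain_concat e cw2)
          omega

end Main

end SatChainAux

open SatChainAux in
/-- Let `E ⊆ ℤ^r` be closed under componentwise minimum, satisfy the exchange
property (for `α, β ∈ E` with `α_j = β_j` there is `ε ∈ E` with `ε_j > α_j` and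
`ε_i ≥ min{α_i, β_i}` for `i ≠ j`, with equality whenever `α_i ≠ β_i`), and possess a
conductor.  Then any two saturated chains in `E` between the same endpoints have the same
length. -/
theorem satChain_length_unique
    (r : ℕ) (E : Set (Fin r → ℤ))
    (hmin : ∀ a ∈ E, ∀ b ∈ E, (fun i => min (a i) (b i)) ∈ E)
    (hexch : ∀ a ∈ E, ∀ b ∈ E, ∀ j : Fin r, a j = b j →
      ∃ ε ∈ E, a j < ε j ∧ ∀ i, i ≠ j →
        min (a i) (b i) ≤ ε i ∧ (a i ≠ b i → ε i = min (a i) (b i)))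
    (hcond : ∃ c ∈ E, ∀ γ : Fin r → ℤ, c ≤ γ → γ ∈ E)
    (a b : Fin r → ℤ) (hab : a < b) (m n : ℕ)
    (h1 : IsSatChain r E a b m) (h2 : IsSatChain r E a b n) :
    m = n :=
  (combined hmin hexch (meas a b)).2 a b m n le_rfl h1 h2
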